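/- Backward-invariant sequences with prescribed asymptotics at minus infinity: let H be a complex Hilbert space, A a bounded operator on H with ‖A‖ ≤ 1, and let Δ be the strong limit of A^n A^{*n}. Fix c ∈ H and m ∈ ℤ and define h : ℤ → H by h(t) := Δ A^{*(m−t)} c for t ≤ m and h(t) := A^{t−m} Δ c for t > m. Then: (i) h(t+1) = A h(t) for every t ∈ ℤ; (ii) ‖h(t)‖² ≤ ‖Δ‖ · ⟨Δ c, c⟩ for all t, and the limit of ‖h(t)‖² as t → −∞ exists and is finite; (iii) for every g : ℤ → H with g(t+1) = A g(t) for all t ∈ ℤ and sup_t ‖g(t)‖ < ∞, one has ⟨(I − Δ) A^{*(m−t)} c, g(t)⟩ → 0 as t → −∞, i.e. h is asymptotic at −∞ to the sequence t ↦ A^{*(m−t)} c; (iv) h is the unique such sequence: if h' : ℤ → H satisfies h'(t+1) = A h'(t) for all t, sup_t ‖h'(t)‖ < ∞, and ⟨A^{*(m−t)} c − h'(t), g(t)⟩ → 0 as t → −∞ for every g as in (iii), then h' = h. -/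

import Mathlib

open ContinuousLinearMap Filter

section BackwardAux

variable {H : Type*} [NormedAddCommGroup H] [InnerProductSpace ℂ H] [CompleteSpace H]

local notation "⟪" x ", " y "⟫" => @inner ℂ _ _ x y

/-- Powers of a contraction are contractive pointwise. -/
lemma aux_pow_apply_norm_le (T : H →L[ℂ] H) (hT : ‖T‖ ≤ 1) :
    ∀ (n : ℕ) (x : H), ‖(T ^ n) x‖ ≤ ‖x‖ := by
  intro n
  induction n with
  | zero => intro x; simp
  | succ n ih =>
    intro x
    have e : (T ^ (n + 1)) x = T ((T ^ n) x) := by rw [pow_succ', mul_apply_eq_comp]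
    rw [e]
    calc ‖T ((T ^ n) x)‖ ≤ ‖T‖ * ‖(T ^ n) x‖ := T.le_opNorm _
      _ ≤ 1 * ‖x‖ := mul_le_mul hT (ih x) (norm_nonneg _) zero_le_one
      _ = ‖x‖ := one_mul _

/-- Cauchy–Schwarz inequality for a positive symmetric operator. -/
lemma aux_cs_pos (T : H →L[ℂ] H) (hsym : ∀ u v : H, ⟪T u, v⟫ = ⟪u, T v⟫)
    (hpos : ∀ u : H, 0 ≤ (⟪T u, u⟫).re) (u v : H) :
    ‖⟪T u, v⟫‖ ^ 2 ≤ (⟪T u, u⟫).re * (⟪T v, v⟫).re := by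
  letI myCore : PreInnerProductSpace.Core ℂ H :=
  { inner := fun x y => ⟪T x, y⟫
    conj_inner_symm := fun x y => by
      rw [← inner_conj_symm, hsym]
      simp
    re_inner_nonneg := hpos
    add_left := fun x y z => by simp [inner_add_left]
    smul_left := fun x y r => by simp [inner_smul_left]; ring }
  have key : ‖⟪T u, v⟫‖ * ‖⟪T v, u⟫‖ ≤ (⟪T u, u⟫).re * (⟪T v, v⟫).re :=
    @InnerProductSpace.Core.inner_mul_inner_self_le ℂ H _ _ _ myCore u v
  have e : ‖⟪T v, u⟫‖ = ‖⟪T u, v⟫‖ := by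
    rw [← inner_conj_symm, hsym]
    exact RCLike.norm_conj _
  rw [e] at key
  rw [sq]
  exact key

end BackwardAux

/-- **Backward-invariant sequences with prescribed asymptotics at minus infinity.**
Let `A` be a contraction with asymptotic limit `Δ = strong-lim Aⁿ A*ⁿ`, `c ∈ H`,
`m ∈ ℤ`, and let `h(t) = Δ A^{*(m-t)} c` for `t ≤ m`, `h(t) = A^{t-m} Δ c` for `t > m`.
Then `h` satisfies the backward recursion `h(t+1) = A h(t)`, is bounded with
`‖h(t)‖² ≤ ‖Δ‖ ⟨Δc, c⟩` and `lim_{t → -∞} ‖h(t)‖²` exists; `h` is asymptotic at `-∞`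
to `t ↦ A^{*(m-t)} c` against every bounded backward-invariant sequence `g`; and `h`
is the unique such sequence. -/
theorem backward_invariant_sequence_asymptotics
    {H : Type*} [NormedAddCommGroup H] [InnerProductSpace ℂ H] [CompleteSpace H]
    (A : H →L[ℂ] H) (hA : ‖A‖ ≤ 1) (Δ : H →L[ℂ] H)
    (hΔ : ∀ x : H,
      Tendsto (fun n : ℕ => ‖(A ^ n * adjoint A ^ n) x - Δ x‖) atTop (nhds 0))
    (c : H) (m : ℤ) (h : ℤ → H)
    (hh : ∀ t : ℤ, h t =
      if t ≤ m then Δ ((adjoint A ^ (m - t).toNat) c) else (A ^ (t - m).toNat) (Δ c)) :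
    (∀ t : ℤ, h (t + 1) = A (h t)) ∧
    ((∀ t : ℤ, ‖h t‖ ^ 2 ≤ ‖Δ‖ * (inner ℂ (Δ c) c : ℂ).re) ∧
      ∃ r : ℝ, Tendsto (fun t : ℤ => ‖h t‖ ^ 2) atBot (nhds r)) ∧
    (∀ g : ℤ → H, (∀ t, g (t + 1) = A (g t)) → (∃ Cb : ℝ, ∀ t, ‖g t‖ ≤ Cb) →
      Tendsto
        (fun t : ℤ =>
          (inner ℂ (((1 : H →L[ℂ] H) - Δ) ((adjoint A ^ (m - t).toNat) c)) (g t) : ℂ))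
        atBot (nhds 0)) ∧
    ∀ h' : ℤ → H, (∀ t, h' (t + 1) = A (h' t)) → (∃ Cb : ℝ, ∀ t, ‖h' t‖ ≤ Cb) →
      (∀ g : ℤ → H, (∀ t, g (t + 1) = A (g t)) → (∃ Cb : ℝ, ∀ t, ‖g t‖ ≤ Cb) →
        Tendsto
          (fun t : ℤ => (inner ℂ ((adjoint A ^ (m - t).toNat) c - h' t) (g t) : ℂ))
          atBot (nhds 0)) →
      h' = h := by
  set B := adjoint A with hB
  have hBnorm : ‖B‖ ≤ 1 := by
    rw [hB]
    calc ‖adjoint A‖ = ‖A‖ := by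
          exact (adjoint : (H →L[ℂ] H) ≃ₗᵢ⋆[ℂ] (H →L[ℂ] H)).norm_map A
      _ ≤ 1 := hA
  have hconv : ∀ x : H, Tendsto (fun n : ℕ => (A ^ n * B ^ n) x) atTop (nhds (Δ x)) :=
    fun x => tendsto_iff_norm_sub_tendsto_zero.mpr (hΔ x)
  have hadjpow : ∀ n : ℕ, adjoint (A ^ n) = B ^ n := fun n => by
    rw [hB, ← star_eq_adjoint, ← star_eq_adjoint, star_pow]
  have hadjpow' : ∀ n : ℕ, adjoint (B ^ n) = A ^ n := fun n => by
    rw [← hadjpow n, adjoint_adjoint]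
  -- key identity A Δ A* = Δ
  have key1 : ∀ x : H, A (Δ (B x)) = Δ x := by
    intro x
    have h1 : Tendsto (fun n : ℕ => (A ^ (n + 1) * B ^ (n + 1)) x) atTop (nhds (Δ x)) :=
      (hconv x).comp (tendsto_add_atTop_nat 1)
    have h2 : (fun n : ℕ => (A ^ (n + 1) * B ^ (n + 1)) x)
        = fun n : ℕ => A ((A ^ n * B ^ n) (B x)) := by
      funext n
      rw [mul_apply_eq_comp, mul_apply_eq_comp, pow_succ' A, pow_succ B, mul_apply_eq_comp, mul_apply_eq_comp]
    rw [h2] at h1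
    have h3 : Tendsto (fun n : ℕ => A ((A ^ n * B ^ n) (B x))) atTop (nhds (A (Δ (B x)))) :=
      (A.continuous.tendsto _).comp (hconv (B x))
    exact tendsto_nhds_unique h3 h1
  have keyn : ∀ (n : ℕ) (x : H), (A ^ n) (Δ ((B ^ n) x)) = Δ x := by
    intro n
    induction n with
    | zero => intro x; simp
    | succ n ih =>
      intro x
      calc (A ^ (n + 1)) (Δ ((B ^ (n + 1)) x))
          = (A ^ n) (A (Δ (B ((B ^ n) x)))) := by
            rw [pow_succ A, pow_succ' B, mul_apply_eq_comp, mul_apply_eq_comp]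
        _ = (A ^ n) (Δ ((B ^ n) x)) := by rw [key1]
        _ = Δ x := ih x
  -- symmetry of Δ
  have hsym : ∀ x y : H, (inner ℂ (Δ x) y : ℂ) = inner ℂ x (Δ y) := by
    intro x y
    have h1 : Tendsto (fun n : ℕ => (inner ℂ ((A ^ n * B ^ n) x) y : ℂ)) atTop
        (nhds (inner ℂ (Δ x) y)) := (hconv x).inner tendsto_const_nhds
    have h2 : Tendsto (fun n : ℕ => (inner ℂ x ((A ^ n * B ^ n) y) : ℂ)) atTop
        (nhds (inner ℂ x (Δ y))) := tendsto_const_nhds.inner (hconv y)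
    have h3 : ∀ n : ℕ, (inner ℂ ((A ^ n * B ^ n) x) y : ℂ) = inner ℂ x ((A ^ n * B ^ n) y) := by
      intro n
      have l : (inner ℂ ((A ^ n) ((B ^ n) x)) y : ℂ) = inner ℂ ((B ^ n) x) ((B ^ n) y) := by
        rw [← hadjpow' n, adjoint_inner_left]
      have r : (inner ℂ ((B ^ n) x) ((B ^ n) y) : ℂ) = inner ℂ x ((A ^ n) ((B ^ n) y)) := by
        conv_lhs => rw [← hadjpow n, adjoint_inner_left, hadjpow n, ← hadjpow' n]
        rw [hadjpow' n]
      rw [mul_apply_eq_comp, mul_apply_eq_comp]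
      exact l.trans r
    exact tendsto_nhds_unique h1 (Tendsto.congr (fun n => (h3 n).symm) h2)
  -- norm limits
  have hnormlim : ∀ x : H, Tendsto (fun n : ℕ => ‖(B ^ n) x‖ ^ 2) atTop
      (nhds ((inner ℂ (Δ x) x : ℂ).re)) := by
    intro x
    have h1 : Tendsto (fun n : ℕ => (inner ℂ ((A ^ n * B ^ n) x) x : ℂ)) atTop
        (nhds (inner ℂ (Δ x) x)) := (hconv x).inner tendsto_const_nhds
    have h2 : Tendsto (fun n : ℕ => (inner ℂ ((A ^ n * B ^ n) x) x : ℂ).re) atTop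
        (nhds ((inner ℂ (Δ x) x : ℂ).re)) := (Complex.continuous_re.tendsto _).comp h1
    refine h2.congr fun n => ?_
    rw [mul_apply_eq_comp, ← hadjpow' n, adjoint_inner_left, inner_self_eq_norm_sq_to_K]
    norm_cast
  have hpos : ∀ x : H, 0 ≤ (inner ℂ (Δ x) x : ℂ).re := fun x =>
    ge_of_tendsto' (hnormlim x) fun n => sq_nonneg _
  have hle_sq : ∀ x : H, (inner ℂ (Δ x) x : ℂ).re ≤ ‖x‖ ^ 2 := fun x =>
    le_of_tendsto' (hnormlim x) fun n =>
      pow_le_pow_left₀ (norm_nonneg _) (aux_pow_apply_norm_le B hBnorm n x) 2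
  -- invariance of the quadratic form
  have hinv : ∀ (n : ℕ) (x : H), (inner ℂ (Δ ((B ^ n) x)) ((B ^ n) x) : ℂ) = inner ℂ (Δ x) x := by
    intro n x
    rw [← hadjpow n, adjoint_inner_right, hadjpow n, keyn n x]
  -- ‖Δ x‖² ≤ ‖Δ‖ ⟨Δx, x⟩
  have hDelta_sq : ∀ x : H, ‖Δ x‖ ^ 2 ≤ ‖Δ‖ * (inner ℂ (Δ x) x : ℂ).re := by
    intro x
    have hcs := aux_cs_pos Δ hsym hpos x (Δ x)
    have e1 : ‖(inner ℂ (Δ x) (Δ x) : ℂ)‖ = ‖Δ x‖ ^ 2 := by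
      rw [inner_self_eq_norm_sq_to_K]
      norm_cast
      simp [abs_of_nonneg, sq_nonneg]
    have e2 : (inner ℂ (Δ (Δ x)) (Δ x) : ℂ).re ≤ ‖Δ‖ * ‖Δ x‖ ^ 2 := by
      calc (inner ℂ (Δ (Δ x)) (Δ x) : ℂ).re ≤ ‖(inner ℂ (Δ (Δ x)) (Δ x) : ℂ)‖ :=
            Complex.re_le_norm _
        _ ≤ ‖Δ (Δ x)‖ * ‖Δ x‖ := norm_inner_le_norm _ _
        _ ≤ (‖Δ‖ * ‖Δ x‖) * ‖Δ x‖ :=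
            mul_le_mul_of_nonneg_right (Δ.le_opNorm _) (norm_nonneg _)
        _ = ‖Δ‖ * ‖Δ x‖ ^ 2 := by ring
    rw [e1] at hcs
    by_cases hz : ‖Δ x‖ = 0
    · rw [hz]
      simpa using mul_nonneg (norm_nonneg Δ) (hpos x)
    · have hzpos : 0 < ‖Δ x‖ ^ 2 := by positivity
      nlinarith [hpos x, hcs, e2]
  -- Part (i)
  have part1 : ∀ t : ℤ, h (t + 1) = A (h t) := by
    intro t
    rcases lt_trichotomy t m with hlt | heq | hgt
    · rw [hh (t + 1), hh t, if_pos (by omega : t + 1 ≤ m), if_pos (le_of_lt hlt)]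
      have hk : (m - t).toNat = (m - (t + 1)).toNat + 1 := by omega
      rw [hk, pow_succ', mul_apply_eq_comp]
      exact (key1 _).symm
    · subst heq
      rw [hh (t + 1), hh t, if_neg (by omega), if_pos le_rfl]
      have h1 : (t + 1 - t).toNat = 1 := by omega
      have h2 : (t - t).toNat = 0 := by omega
      rw [h1, h2, pow_one, pow_zero]
      simp
    · rw [hh (t + 1), hh t, if_neg (by omega), if_neg (by omega)]
      have hk : (t + 1 - m).toNat = (t - m).toNat + 1 := by omega
      rw [hk, pow_succ', mul_apply_eq_comp]
  -- Part (ii) bound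
  have part2a : ∀ t : ℤ, ‖h t‖ ^ 2 ≤ ‖Δ‖ * (inner ℂ (Δ c) c : ℂ).re := by
    intro t
    rw [hh t]
    split_ifs with ht
    · calc ‖Δ ((B ^ (m - t).toNat) c)‖ ^ 2
          ≤ ‖Δ‖ * (inner ℂ (Δ ((B ^ (m - t).toNat) c)) ((B ^ (m - t).toNat) c) : ℂ).re :=
            hDelta_sq _
        _ = ‖Δ‖ * (inner ℂ (Δ c) c : ℂ).re := by rw [hinv]
    · calc ‖(A ^ (t - m).toNat) (Δ c)‖ ^ 2 ≤ ‖Δ c‖ ^ 2 :=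
            pow_le_pow_left₀ (norm_nonneg _) (aux_pow_apply_norm_le A hA _ _) 2
        _ ≤ ‖Δ‖ * (inner ℂ (Δ c) c : ℂ).re := hDelta_sq c
  -- Part (ii) limit
  have htoNat : Tendsto (fun t : ℤ => (m - t).toNat) atBot atTop := by
    rw [tendsto_atTop]
    intro b
    rw [eventually_atBot]
    exact ⟨m - b, fun t ht => by omega⟩
  have part2b : ∃ r : ℝ, Tendsto (fun t : ℤ => ‖h t‖ ^ 2) atBot (nhds r) := by
    have hFmono : Monotone (fun n : ℕ => ‖Δ ((B ^ n) c)‖ ^ 2) := by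
      apply monotone_nat_of_le_succ
      intro n
      have e : Δ ((B ^ n) c) = A (Δ ((B ^ (n + 1)) c)) := by
        rw [pow_succ', mul_apply_eq_comp]
        exact (key1 _).symm
      have hle : ‖Δ ((B ^ n) c)‖ ≤ ‖Δ ((B ^ (n + 1)) c)‖ := by
        rw [e]
        calc ‖A (Δ ((B ^ (n + 1)) c))‖ ≤ ‖A‖ * ‖Δ ((B ^ (n + 1)) c)‖ := A.le_opNorm _
          _ ≤ 1 * ‖Δ ((B ^ (n + 1)) c)‖ :=
              mul_le_mul_of_nonneg_right hA (norm_nonneg _)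
          _ = ‖Δ ((B ^ (n + 1)) c)‖ := one_mul _
      exact pow_le_pow_left₀ (norm_nonneg _) hle 2
    have hFbdd : BddAbove (Set.range fun n : ℕ => ‖Δ ((B ^ n) c)‖ ^ 2) := by
      refine ⟨‖Δ‖ * (inner ℂ (Δ c) c : ℂ).re, ?_⟩
      rintro y ⟨n, rfl⟩
      calc ‖Δ ((B ^ n) c)‖ ^ 2
          ≤ ‖Δ‖ * (inner ℂ (Δ ((B ^ n) c)) ((B ^ n) c) : ℂ).re := hDelta_sq _
        _ = ‖Δ‖ * (inner ℂ (Δ c) c : ℂ).re := by rw [hinv]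
    refine ⟨⨆ n, ‖Δ ((B ^ n) c)‖ ^ 2, ?_⟩
    have hFlim := tendsto_atTop_ciSup hFmono hFbdd
    refine (hFlim.comp htoNat).congr' ?_
    filter_upwards [eventually_le_atBot m] with t ht
    simp only [Function.comp_apply]
    rw [hh t, if_pos ht]
  -- Part (iii)
  have part3 : ∀ g : ℤ → H, (∀ t, g (t + 1) = A (g t)) → (∃ Cb : ℝ, ∀ t, ‖g t‖ ≤ Cb) →
      Tendsto
        (fun t : ℤ =>
          (inner ℂ (((1 : H →L[ℂ] H) - Δ) ((B ^ (m - t).toNat) c)) (g t) : ℂ))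
        atBot (nhds 0) := by
    rintro g - ⟨Cb, hCb⟩
    have hsymT : ∀ u v : H, (inner ℂ (((1 : H →L[ℂ] H) - Δ) u) v : ℂ)
        = inner ℂ u (((1 : H →L[ℂ] H) - Δ) v) := by
      intro u v
      simp only [sub_apply, one_apply_eq_self, inner_sub_left, inner_sub_right]
      rw [hsym]
    have hposT : ∀ u : H, 0 ≤ (inner ℂ (((1 : H →L[ℂ] H) - Δ) u) u : ℂ).re := by
      intro u
      have e : (inner ℂ (((1 : H →L[ℂ] H) - Δ) u) u : ℂ).re
          = ‖u‖ ^ 2 - (inner ℂ (Δ u) u : ℂ).re := by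
        simp only [sub_apply, one_apply_eq_self, inner_sub_left, Complex.sub_re]
        rw [inner_self_eq_norm_sq_to_K]
        norm_cast
      rw [e]
      linarith [hle_sq u]
    have hreT : ∀ n : ℕ, (inner ℂ (((1 : H →L[ℂ] H) - Δ) ((B ^ n) c)) ((B ^ n) c) : ℂ).re
        = ‖(B ^ n) c‖ ^ 2 - (inner ℂ (Δ c) c : ℂ).re := by
      intro n
      simp only [sub_apply, one_apply_eq_self, inner_sub_left, Complex.sub_re]
      rw [inner_self_eq_norm_sq_to_K, hinv n c]
      norm_cast
    have hb : ∀ t : ℤ, ‖(inner ℂ (((1 : H →L[ℂ] H) - Δ) ((B ^ (m - t).toNat) c)) (g t) : ℂ)‖ ≤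
        Real.sqrt ((‖(B ^ (m - t).toNat) c‖ ^ 2 - (inner ℂ (Δ c) c : ℂ).re) * Cb ^ 2) := by
      intro t
      set n := (m - t).toNat with hn
      have hcs := aux_cs_pos ((1 : H →L[ℂ] H) - Δ) hsymT hposT ((B ^ n) c) (g t)
      have e2 : (inner ℂ (((1 : H →L[ℂ] H) - Δ) (g t)) (g t) : ℂ).re ≤ Cb ^ 2 := by
        have e : (inner ℂ (((1 : H →L[ℂ] H) - Δ) (g t)) (g t) : ℂ).re
            = ‖g t‖ ^ 2 - (inner ℂ (Δ (g t)) (g t) : ℂ).re := by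
          simp only [sub_apply, one_apply_eq_self, inner_sub_left, Complex.sub_re]
          rw [inner_self_eq_norm_sq_to_K]
          norm_cast
        rw [e]
        have h1 : ‖g t‖ ^ 2 ≤ Cb ^ 2 := pow_le_pow_left₀ (norm_nonneg _) (hCb t) 2
        linarith [hpos (g t)]
      have h3 : ‖(inner ℂ (((1 : H →L[ℂ] H) - Δ) ((B ^ n) c)) (g t) : ℂ)‖ ^ 2 ≤
          (‖(B ^ n) c‖ ^ 2 - (inner ℂ (Δ c) c : ℂ).re) * Cb ^ 2 := by
        calc ‖(inner ℂ (((1 : H →L[ℂ] H) - Δ) ((B ^ n) c)) (g t) : ℂ)‖ ^ 2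
            ≤ (inner ℂ (((1 : H →L[ℂ] H) - Δ) ((B ^ n) c)) ((B ^ n) c) : ℂ).re
              * (inner ℂ (((1 : H →L[ℂ] H) - Δ) (g t)) (g t) : ℂ).re := hcs
          _ ≤ (inner ℂ (((1 : H →L[ℂ] H) - Δ) ((B ^ n) c)) ((B ^ n) c) : ℂ).re * Cb ^ 2 :=
              mul_le_mul_of_nonneg_left e2 (hposT _)
          _ = (‖(B ^ n) c‖ ^ 2 - (inner ℂ (Δ c) c : ℂ).re) * Cb ^ 2 := by rw [hreT n]
      calc ‖(inner ℂ (((1 : H →L[ℂ] H) - Δ) ((B ^ n) c)) (g t) : ℂ)‖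
          = Real.sqrt (‖(inner ℂ (((1 : H →L[ℂ] H) - Δ) ((B ^ n) c)) (g t) : ℂ)‖ ^ 2) :=
            (Real.sqrt_sq (norm_nonneg _)).symm
        _ ≤ Real.sqrt ((‖(B ^ n) c‖ ^ 2 - (inner ℂ (Δ c) c : ℂ).re) * Cb ^ 2) :=
            Real.sqrt_le_sqrt h3
    have hlim0 : Tendsto
        (fun n : ℕ => Real.sqrt ((‖(B ^ n) c‖ ^ 2 - (inner ℂ (Δ c) c : ℂ).re) * Cb ^ 2))
        atTop (nhds 0) := by
      have h1 : Tendsto (fun n : ℕ => (‖(B ^ n) c‖ ^ 2 - (inner ℂ (Δ c) c : ℂ).re) * Cb ^ 2)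
          atTop (nhds 0) := by
        have := ((hnormlim c).sub (tendsto_const_nhds (x := (inner ℂ (Δ c) c : ℂ).re))).mul_const (Cb ^ 2)
        simpa using this
      have h2 := (Real.continuous_sqrt.tendsto 0).comp h1
      simpa [Function.comp_def] using h2
    have hbound : Tendsto
        (fun t : ℤ =>
          Real.sqrt ((‖(B ^ (m - t).toNat) c‖ ^ 2 - (inner ℂ (Δ c) c : ℂ).re) * Cb ^ 2))
        atBot (nhds 0) := hlim0.comp htoNat
    rw [tendsto_zero_iff_norm_tendsto_zero]
    exact squeeze_zero (fun t => norm_nonneg _) hb hbound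
  refine ⟨part1, ⟨part2a, part2b⟩, part3, ?_⟩
  -- Part (iv)
  rintro h' hrec' ⟨Cb', hCb'⟩ hAs
  have hiter : ∀ (g : ℤ → H), (∀ t, g (t + 1) = A (g t)) →
      ∀ (s : ℤ) (k : ℕ), g (s + k) = (A ^ k) (g s) := by
    intro g hg s k
    induction k with
    | zero => simp
    | succ k ih =>
      have e : (s + ((k : ℤ) + 1)) = (s + k) + 1 := by ring
      push_cast
      rw [e, hg, ih, pow_apply_eq_iterate, Function.iterate_succ_apply']
  set d : ℤ → H := fun t => h' t - h t with hd
  have hdrec : ∀ t, d (t + 1) = A (d t) := by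
    intro t
    simp only [hd, hrec' t, part1 t, map_sub]
  have hdbd : ∃ Cb : ℝ, ∀ t, ‖d t‖ ≤ Cb := by
    refine ⟨Cb' + Real.sqrt (‖Δ‖ * (inner ℂ (Δ c) c : ℂ).re), fun t => ?_⟩
    have h1 : ‖h t‖ ≤ Real.sqrt (‖Δ‖ * (inner ℂ (Δ c) c : ℂ).re) := by
      rw [show ‖h t‖ = Real.sqrt (‖h t‖ ^ 2) from (Real.sqrt_sq (norm_nonneg _)).symm]
      exact Real.sqrt_le_sqrt (part2a t)
    calc ‖h' t - h t‖ ≤ ‖h' t‖ + ‖h t‖ := norm_sub_le _ _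
      _ ≤ Cb' + Real.sqrt (‖Δ‖ * (inner ℂ (Δ c) c : ℂ).re) := add_le_add (hCb' t) h1
  have t1 := hAs d hdrec hdbd
  have t2 := part3 d hdrec hdbd
  have t3 : Tendsto (fun t : ℤ => (inner ℂ (d t) (d t) : ℂ)) atBot (nhds 0) := by
    have hsub := t2.sub t1
    rw [sub_zero] at hsub
    refine hsub.congr' ?_
    filter_upwards [eventually_le_atBot m] with t ht
    have hht : h t = Δ ((B ^ (m - t).toNat) c) := by rw [hh t, if_pos ht]
    rw [← inner_sub_left]
    congr 1
    simp only [sub_apply, one_apply_eq_self, hd]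
    rw [← hht]
    abel
  have hdnorm : Tendsto (fun t : ℤ => ‖d t‖ ^ 2) atBot (nhds 0) := by
    have h1 := (Complex.continuous_re.tendsto 0).comp t3
    rw [Complex.zero_re] at h1
    refine h1.congr fun t => ?_
    simp only [Function.comp_apply]
    rw [inner_self_eq_norm_sq_to_K]
    norm_cast
  funext t
  have hle0 : ‖d t‖ ^ 2 ≤ 0 := by
    refine ge_of_tendsto hdnorm ?_
    filter_upwards [eventually_le_atBot t] with s hs
    have e : d t = (A ^ (t - s).toNat) (d s) := by
      have e2 := hiter d hdrec s ((t - s).toNat)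
      rwa [show s + ((t - s).toNat : ℤ) = t by omega] at e2
    rw [e]
    exact pow_le_pow_left₀ (norm_nonneg _) (aux_pow_apply_norm_le A hA _ _) 2
  have : d t = 0 := by
    have h0 : ‖d t‖ ^ 2 = 0 := le_antisymm hle0 (sq_nonneg _)
    have : ‖d t‖ = 0 := by
      nlinarith [norm_nonneg (d t)]
    exact norm_eq_zero.mp this
  have := sub_eq_zero.mp this
  exact this
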